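/- Let p be a prime, and let n, j be nonnegative integers and m, N positive integers with n ≡ m (mod φ(p^N)) and m, n ≥ N, where φ is Euler's totient function. Then j! * S(n,j) ≡ j! * S(m,j) (mod p^N). -/

import Mathlib

/-- Stirling numbers of the second kind, defined by the recursion
`S(0,0)=1`, `S(n,0)=S(0,m)=0` for `n,m ≥ 1`, `S(n+1,m+1)=S(n,m)+(m+1)*S(n,m+1)`. -/
def stirling2 : ℕ → ℕ → ℕ
  | 0, 0 => 1
  | 0, _ + 1 => 0
  | _ + 1, 0 => 0
  | n + 1, m + 1 => stirling2 n m + (m + 1) * stirling2 n (m + 1)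

open Finset

def AA (j n : ℕ) : ℤ := ∑ l ∈ range (j + 1), (-1 : ℤ) ^ l * (j.choose l) * (l : ℤ) ^ n

lemma lemG (n j : ℕ) :
    AA (j+1) n = AA j n - ∑ k ∈ range (j+1), (-1:ℤ)^k * (j.choose k) * ((k:ℤ)+1)^n := by
  unfold AA
  rw [Finset.sum_range_succ' (fun l => (-1:ℤ)^l * (((j+1).choose l : ℤ)) * (l:ℤ)^n) (j+1),
      Finset.sum_range_succ' (fun l => (-1:ℤ)^l * ((j.choose l : ℤ)) * (l:ℤ)^n) j]
  have key : ∀ k ∈ range (j+1),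
      (fun k => (-1:ℤ)^(k+1) * (((j+1).choose (k+1) : ℤ)) * (((k+1:ℕ)):ℤ)^n) k
        = (fun k => -((-1:ℤ)^k * ((j.choose k : ℤ)) * ((k:ℤ)+1)^n)
          + (-1:ℤ)^(k+1) * ((j.choose (k+1) : ℤ)) * (((k+1:ℕ)):ℤ)^n) k := by
    intro k _
    simp only [Nat.choose_succ_succ]
    push_cast
    ring
  rw [Finset.sum_congr rfl key, Finset.sum_add_distrib, Finset.sum_neg_distrib,
      Finset.sum_range_succ (fun k => (-1:ℤ)^(k+1) * ((j.choose (k+1) : ℤ)) * (((k+1:ℕ)):ℤ)^n) j]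
  simp [Nat.choose_succ_self]
  ring

lemma lemRec (n j : ℕ) :
    AA (j+1) (n+1) = (j+1) * (AA (j+1) n - AA j n) := by
  conv_lhs => rw [AA]
  rw [Finset.sum_range_succ' (fun l => (-1:ℤ)^l * (((j+1).choose l : ℤ)) * (l:ℤ)^(n+1)) (j+1)]
  have key : ∀ k ∈ range (j+1),
      (fun k => (-1:ℤ)^(k+1) * (((j+1).choose (k+1) : ℤ)) * (((k+1:ℕ)):ℤ)^(n+1)) k
        = (fun k => -((j:ℤ)+1) * ((-1:ℤ)^k * ((j.choose k : ℤ)) * ((k:ℤ)+1)^n)) k := by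
    intro k _
    have h := Nat.add_one_mul_choose_eq j k
    have h2 : ((j+1) * j.choose k : ℤ) = ((j+1).choose (k+1) : ℤ) * (k+1) := by
      exact_mod_cast congrArg (Nat.cast : ℕ → ℤ) h
    push_cast
    push_cast at h2
    linear_combination ((-1:ℤ))^k * ((k:ℤ)+1)^n * h2
  rw [Finset.sum_congr rfl key, ← Finset.mul_sum]
  have := lemG n j
  simp only [this]
  push_cast
  ring

lemma keyA : ∀ n j : ℕ, AA j n = (-1:ℤ)^j * (Nat.factorial j) * (stirling2 n j) := by
  intro n
  induction n with
  | zero =>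
    intro j
    have h0 : AA j 0 = ∑ l ∈ range (j+1), (-1:ℤ)^l * (j.choose l) := by
      unfold AA; apply Finset.sum_congr rfl; intro l _; rw [pow_zero, mul_one]
    rw [h0, Int.alternating_sum_range_choose]
    match j with
    | 0 => simp [stirling2]
    | j+1 => simp [stirling2]
  | succ n ih =>
    intro j
    match j with
    | 0 =>
      show (∑ l ∈ range 1, (-1:ℤ)^l * ((0:ℕ).choose l) * (l:ℤ)^(n+1)) = _
      simp [stirling2]
    | j+1 =>
      rw [lemRec, ih (j+1), ih j]
      show _ = (-1:ℤ)^(j+1) * ((j+1).factorial) * ((stirling2 n j + (j + 1) * stirling2 n (j+1) : ℕ) : ℤ)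
      rw [Nat.factorial_succ]
      push_cast
      ring

lemma powCongLe (p N : ℕ) (hp : p.Prime) (hN : 0 < N) {n m : ℕ}
    (hmod : n ≡ m [MOD (p ^ N).totient]) (hn : N ≤ n) (hm : N ≤ m) (hle : m ≤ n) (l : ℕ) :
    l ^ n ≡ l ^ m [MOD p ^ N] := by
  by_cases hpl : p ∣ l
  · have h1 : p ^ N ∣ l ^ n := (pow_dvd_pow_of_dvd hpl N).trans (pow_dvd_pow l hn)
    have h2 : p ^ N ∣ l ^ m := (pow_dvd_pow_of_dvd hpl N).trans (pow_dvd_pow l hm)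
    exact ((Nat.modEq_zero_iff_dvd).mpr h1).trans ((Nat.modEq_zero_iff_dvd).mpr h2).symm
  · have hcop : Nat.Coprime l (p ^ N) :=
      Nat.Coprime.pow_right N (((Nat.Prime.coprime_iff_not_dvd hp).mpr hpl).symm)
    have hdvd : (p ^ N).totient ∣ n - m := (Nat.modEq_iff_dvd' hle).mp hmod.symm
    obtain ⟨k, hk⟩ := hdvd
    have hnm : n = m + (p ^ N).totient * k := by omega
    rw [hnm, pow_add, pow_mul]
    calc l ^ m * (l ^ (p ^ N).totient) ^ k
        ≡ l ^ m * 1 ^ k [MOD p ^ N] :=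
          Nat.ModEq.mul rfl (Nat.ModEq.pow k (Nat.ModEq.pow_totient hcop))
      _ = l ^ m := by rw [one_pow, mul_one]

lemma powCong (p N : ℕ) (hp : p.Prime) (hN : 0 < N) {n m : ℕ}
    (hmod : n ≡ m [MOD (p ^ N).totient]) (hn : N ≤ n) (hm : N ≤ m) (l : ℕ) :
    l ^ n ≡ l ^ m [MOD p ^ N] := by
  rcases le_total m n with h | h
  · exact powCongLe p N hp hN hmod hn hm h l
  · exact (powCongLe p N hp hN hmod.symm hm hn h l).symm

lemma sumCong {β : Type*} (s : Finset β) (f g : β → ℤ) (M : ℤ)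
    (h : ∀ i ∈ s, f i ≡ g i [ZMOD M]) :
    (∑ i ∈ s, f i) ≡ (∑ i ∈ s, g i) [ZMOD M] := by
  classical
  induction s using Finset.induction_on with
  | empty => simp [Int.ModEq.refl]
  | insert _ _ hx ih =>
    rw [Finset.sum_insert hx, Finset.sum_insert hx]
    exact Int.ModEq.add (h _ (Finset.mem_insert_self _ _))
      (ih fun i hi => h i (Finset.mem_insert_of_mem hi))

theorem stmt1 (p n j m N : ℕ) (hp : p.Prime) (hm : 0 < m) (hN : 0 < N)
    (hmod : n ≡ m [MOD Nat.totient (p ^ N)]) (hn : N ≤ n) (hm' : N ≤ m) :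
    (Nat.factorial j * stirling2 n j : ℤ) ≡
      (Nat.factorial j * stirling2 m j : ℤ) [ZMOD (p : ℤ) ^ N] := by
  have hA : AA j n ≡ AA j m [ZMOD (p : ℤ) ^ N] := by
    apply sumCong
    intro l _
    apply Int.ModEq.mul rfl
    have := powCong p N hp hN hmod hn hm' l
    have h2 : ((l ^ n : ℕ) : ℤ) ≡ ((l ^ m : ℕ) : ℤ) [ZMOD ((p ^ N : ℕ) : ℤ)] :=
      Int.natCast_modEq_iff.mpr this
    push_cast at h2
    exact h2
  have hsq : (-1:ℤ)^j * (-1:ℤ)^j = 1 := by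
    rw [← pow_add]; exact Even.neg_one_pow ⟨j, rfl⟩
  have e1 : ∀ k : ℕ, (Nat.factorial j * stirling2 k j : ℤ) = (-1:ℤ)^j * AA j k := by
    intro k
    rw [keyA k j, ← mul_assoc, ← mul_assoc, hsq, one_mul]
  rw [e1 n, e1 m]
  exact Int.ModEq.mul rfl hA
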